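/- arXiv:1307.2730 — 3 statements merged into one kernel-verified Lean document; each statement's English description precedes it below -/
import Mathlib

section
/- Let φ(x) = x(x+1)(2x+1)/6 and ψ(x) = x(x+1)/2, both strictly increasing bijections from [0,∞) onto itself. Given A, B > 0 with φ(ψ⁻¹(B)) ≤ A, there exists a unique pair (x̂, ŷ) ∈ [0,∞)² with ŷ ≥ x̂ such that φ(x̂) + φ(ŷ) = A and ψ(ŷ) − ψ(x̂) = B. -/
noncomputable def phi (x : ℝ) : ℝ := x * (x + 1) * (2 * x + 1) / 6
noncomputable def psi (x : ℝ) : ℝ := x * (x + 1) / 2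

lemma psi_lt' {a b : ℝ} (ha : 0 ≤ a) (h : a < b) : psi a < psi b := by
  unfold psi; nlinarith

lemma phi_lt' {a b : ℝ} (ha : 0 ≤ a) (h : a < b) : phi a < phi b := by
  unfold phi
  have hb : 0 < b := lt_of_le_of_lt ha h
  nlinarith [mul_pos (sub_pos.2 h) (sub_pos.2 h), sq_nonneg (a + b), mul_nonneg ha ha,
    mul_nonneg (mul_nonneg ha ha) ha, mul_pos hb hb, mul_nonneg (mul_nonneg hb.le hb.le) (sub_pos.2 h).le]

lemma phi_nonneg' {x : ℝ} (hx : 0 ≤ x) : 0 ≤ phi x := by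
  unfold phi
  nlinarith [mul_nonneg (mul_nonneg hx hx) hx, mul_nonneg hx hx]

lemma psi_nonneg' {x : ℝ} (hx : 0 ≤ x) : 0 ≤ psi x := by
  unfold psi; nlinarith

lemma key_lt {B : ℝ} (a1 a2 b1 b2 : ℝ) (ha1 : 0 ≤ a1) (ha2 : 0 ≤ a2)
    (hb1 : 0 ≤ b1) (hb2 : 0 ≤ b2)
    (hda : psi a2 - psi a1 = B) (hdb : psi b2 - psi b1 = B) (h : a1 < b1) :
    phi a1 + phi a2 < phi b1 + phi b2 := by
  have hps : psi a2 < psi b2 := by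
    have := psi_lt' ha1 h; linarith
  have h2 : a2 < b2 := by
    by_contra hc
    push_neg at hc
    rcases eq_or_lt_of_le hc with he | hl
    · rw [he] at hps; linarith
    · have := psi_lt' hb2 hl; linarith
  have := phi_lt' ha1 h
  have := phi_lt' ha2 h2
  linarith

theorem exists_unique_pair (A B : ℝ) (hA : 0 < A) (hB : 0 < B)
    (psiInv : ℝ → ℝ)
    (hpsiInv : ∀ y : ℝ, 0 ≤ y → 0 ≤ psiInv y ∧ psi (psiInv y) = y)
    (hcond : phi (psiInv B) ≤ A) :
    ∃! p : ℝ × ℝ, 0 ≤ p.1 ∧ 0 ≤ p.2 ∧ p.1 ≤ p.2 ∧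
      phi p.1 + phi p.2 = A ∧ psi p.2 - psi p.1 = B := by
  -- psiInv has an explicit formula
  have hInvEq : ∀ y : ℝ, 0 ≤ y → psiInv y = (Real.sqrt (8 * y + 1) - 1) / 2 := by
    intro y hy
    obtain ⟨ht0, ht1⟩ := hpsiInv y hy
    set t := psiInv y with htdef
    have h1 : t * (t + 1) / 2 = y := ht1
    have hsq : 8 * y + 1 = (2 * t + 1) ^ 2 := by nlinarith
    rw [hsq, Real.sqrt_sq (by linarith)]
    ring
  set f : ℝ → ℝ := fun x => phi x + phi ((Real.sqrt (8 * (psi x + B) + 1) - 1) / 2) with hf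
  have hfc : Continuous f := by
    rw [hf]
    unfold phi psi
    continuity
  have hM : (0 : ℝ) ≤ 6 * A := by linarith
  have hf0 : f 0 ≤ A := by
    have h0 : psi 0 = 0 := by unfold psi; ring
    have hphi0 : phi 0 = 0 := by unfold phi; ring
    have : f 0 = phi (psiInv B) := by
      rw [hf]
      simp only [h0, hphi0, zero_add]
      rw [hInvEq B hB.le]
    linarith
  have hfM : A ≤ f (6 * A) := by
    have hM0 : (0:ℝ) ≤ 6 * A := hM
    have harg : (1:ℝ) ≤ 8 * (psi (6 * A) + B) + 1 := by
      have := psi_nonneg' hM0; linarith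
    have hs1 : (1:ℝ) ≤ Real.sqrt (8 * (psi (6 * A) + B) + 1) := by
      have := Real.sqrt_le_sqrt harg
      rwa [Real.sqrt_one] at this
    have hs0 : 0 ≤ (Real.sqrt (8 * (psi (6 * A) + B) + 1) - 1) / 2 := by linarith
    have h2 : 0 ≤ phi ((Real.sqrt (8 * (psi (6 * A) + B) + 1) - 1) / 2) :=
      phi_nonneg' hs0
    have h3 : A ≤ phi (6 * A) := by
      unfold phi
      nlinarith [mul_pos hA hA, mul_pos (mul_pos hA hA) hA]
    rw [hf]; dsimp only; linarith
  obtain ⟨x, hxmem, hgx⟩ :=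
    intermediate_value_Icc hM hfc.continuousOn ⟨hf0, hfM⟩
  have hx0 : 0 ≤ x := hxmem.1
  have hpxB : 0 ≤ psi x + B := by have := psi_nonneg' hx0; linarith
  obtain ⟨hy0, hyeq⟩ := hpsiInv (psi x + B) hpxB
  set y := psiInv (psi x + B) with hydef
  have hyform : y = (Real.sqrt (8 * (psi x + B) + 1) - 1) / 2 := hInvEq _ hpxB
  have hsum : phi x + phi y = A := by
    rw [hyform]; exact hgx
  have hdiff : psi y - psi x = B := by rw [hyeq]; ring
  have hxy : x ≤ y := by
    by_contra hc
    push_neg at hc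
    have := psi_lt' hy0 hc
    linarith
  refine ⟨(x, y), ⟨hx0, hy0, hxy, hsum, hdiff⟩, ?_⟩
  rintro ⟨q1, q2⟩ ⟨hq1, hq2, hq12, hqsum, hqdiff⟩
  have hq1x : q1 = x := by
    rcases lt_trichotomy q1 x with h | h | h
    · have := key_lt q1 q2 x y hq1 hq2 hx0 hy0 hqdiff hdiff h
      linarith
    · exact h
    · have := key_lt x y q1 q2 hx0 hy0 hq1 hq2 hdiff hqdiff h
      linarith
  have hq2y : q2 = y := by
    have hps : psi q2 = psi y := by rw [hq1x] at hqdiff; linarith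
    rcases lt_trichotomy q2 y with h | h | h
    · have := psi_lt' hq2 h; linarith
    · exact h
    · have := psi_lt' hy0 h; linarith
  simp [hq1x, hq2y]
end

section
/- Let d, d*, c* > 0 be fixed, and for each N large enough let (x_N, y_N) ∈ [0,∞)² with y_N > x_N be the unique solution of φ(x_N) + φ(y_N) = 2(d*/d)N² and ψ(y_N) − ψ(x_N) = (c*/d)N, where φ(x) = x(x+1)(2x+1)/6 and ψ(x) = x(x+1)/2. Then x_N ≍ N^{2/3}, y_N ≍ N^{2/3}, and y_N − x_N ≍ N^{1/3}; that is, there exist constants 0 < c ≤ c' and N₀ such that for all N ≥ N₀: c N^{2/3} ≤ x_N ≤ c' N^{2/3}, c N^{2/3} ≤ y_N ≤ c' N^{2/3}, and c N^{1/3} ≤ y_N − x_N ≤ c' N^{1/3}. -/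
set_option maxHeartbeats 1000000


lemma cube_le_aux {s t : ℝ} (hs : 0 ≤ s) (h : s ^ 3 ≤ t ^ 3) : s ≤ t := by
  by_contra hc
  push_neg at hc
  nlinarith [sq_nonneg (s + t), sq_nonneg (s - t), mul_pos (sub_pos.2 hc) (sub_pos.2 hc),
    mul_nonneg hs hs, mul_nonneg (mul_nonneg hs hs) hs, sq_nonneg (s + 2*t), sq_nonneg (2*s + t)]

lemma cube_root_exists {s : ℝ} (hs : 0 < s) : ∃ r : ℝ, 0 < r ∧ r ^ 3 = s := by
  refine ⟨s ^ ((1:ℝ)/3), Real.rpow_pos_of_pos hs _, ?_⟩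
  rw [← Real.rpow_natCast (s ^ ((1:ℝ)/3)) 3, ← Real.rpow_mul hs.le]
  norm_num

theorem QDQC_asymptotic_law (d dstar cstar : ℝ)
    (hd : 0 < d) (hdstar : 0 < dstar) (hcstar : 0 < cstar)
    (x y : ℕ → ℝ)
    (hxy : ∀ᶠ N : ℕ in Filter.atTop,
      0 ≤ x N ∧ x N < y N ∧
      phi (x N) + phi (y N) = 2 * (dstar / d) * (N : ℝ) ^ 2 ∧
      psi (y N) - psi (x N) = (cstar / d) * (N : ℝ)) :
    ∃ c c' : ℝ, 0 < c ∧ c ≤ c' ∧ ∃ N₀ : ℕ, ∀ N ≥ N₀,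
      (c * (N : ℝ) ^ ((2 : ℝ) / 3) ≤ x N ∧ x N ≤ c' * (N : ℝ) ^ ((2 : ℝ) / 3)) ∧
      (c * (N : ℝ) ^ ((2 : ℝ) / 3) ≤ y N ∧ y N ≤ c' * (N : ℝ) ^ ((2 : ℝ) / 3)) ∧
      (c * (N : ℝ) ^ ((1 : ℝ) / 3) ≤ y N - x N ∧ y N - x N ≤ c' * (N : ℝ) ^ ((1 : ℝ) / 3)) := by
  obtain ⟨a, ha_def⟩ : ∃ a : ℝ, a = dstar / d := ⟨_, rfl⟩
  obtain ⟨b, hb_def⟩ : ∃ b : ℝ, b = cstar / d := ⟨_, rfl⟩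
  rw [← ha_def, ← hb_def] at hxy
  have ha : 0 < a := ha_def ▸ div_pos hdstar hd
  have hb : 0 < b := hb_def ▸ div_pos hcstar hd
  obtain ⟨α, hα, hα3⟩ := cube_root_exists (show (0:ℝ) < 6*a by linarith)
  obtain ⟨β, hβ, hβ3⟩ := cube_root_exists (show (0:ℝ) < 3*a by linarith)
  obtain ⟨γ, hγ, hγ3⟩ := cube_root_exists (show (0:ℝ) < 3*a/2 by linarith)
  have hγα : γ ≤ α := cube_le_aux hγ.le (by rw [hγ3, hα3]; linarith)
  obtain ⟨B₂, hB₂, hβB₂⟩ : ∃ B₂ : ℝ, 0 < B₂ ∧ β * B₂ = 2*b :=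
    ⟨2*b/β, by positivity, by field_simp⟩
  obtain ⟨c₂, hc₂, hc₂eq⟩ : ∃ c₂ : ℝ, 0 < c₂ ∧ c₂ * (3*α) = 2*b :=
    ⟨2*b/(3*α), by positivity, by field_simp⟩
  refine ⟨min (γ/2) c₂, max α B₂, by positivity, ?_, ?_⟩
  · calc min (γ/2) c₂ ≤ γ/2 := min_le_left _ _
      _ ≤ α := by linarith
      _ ≤ max α B₂ := le_max_left _ _
  have hU : Filter.Tendsto (fun N : ℕ => ((N:ℝ)) ^ ((1:ℝ)/3)) Filter.atTop Filter.atTop :=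
    (tendsto_rpow_atTop (by norm_num : (0:ℝ) < 1/3)).comp tendsto_natCast_atTop_atTop
  have hev := (hU.eventually_ge_atTop (1 + 2/γ + 1/α + 4*B₂*α^2/a)).and hxy
  rw [Filter.eventually_atTop] at hev
  obtain ⟨N₀, hN₀⟩ := hev
  refine ⟨N₀, fun N hN => ?_⟩
  obtain ⟨hu, hx0, hlt, hA, hB⟩ := hN₀ N hN
  obtain ⟨u, hu_def⟩ : ∃ u : ℝ, u = (N:ℝ) ^ ((1:ℝ)/3) := ⟨_, rfl⟩
  rw [← hu_def] at hu
  have hu0 : 0 ≤ u := hu_def ▸ Real.rpow_nonneg (Nat.cast_nonneg N) _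
  have hu3 : u ^ 3 = (N:ℝ) := by
    rw [hu_def, ← Real.rpow_natCast ((N:ℝ) ^ ((1:ℝ)/3)) 3, ← Real.rpow_mul (Nat.cast_nonneg N)]
    norm_num
  have hu2 : (N:ℝ) ^ ((2:ℝ)/3) = u ^ 2 := by
    rw [hu_def, ← Real.rpow_natCast ((N:ℝ) ^ ((1:ℝ)/3)) 2, ← Real.rpow_mul (Nat.cast_nonneg N)]
    norm_num
  have h2γ : 0 < 2/γ := by positivity
  have h1α : 0 < 1/α := by positivity
  have h4B : 0 < 4*B₂*α^2/a := by positivity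
  have hu1 : 1 ≤ u := by linarith
  have hupos : 0 < u := lt_of_lt_of_le one_pos hu1
  have huu : u ≤ u ^ 2 := by nlinarith
  -- threshold facts
  have hγu : 2 ≤ γ * u ^ 2 := by
    have h1 : 2/γ ≤ u := by linarith
    have h2 : 2 ≤ γ * u := by rw [div_le_iff₀ hγ] at h1; linarith
    linarith [mul_nonneg hγ.le (sub_nonneg.2 huu)]
  have hαu : 1 ≤ α * u ^ 2 := by
    have h1 : 1/α ≤ u := by linarith
    have h2 : 1 ≤ α * u := by rw [div_le_iff₀ hα] at h1; linarith
    linarith [mul_nonneg hα.le (sub_nonneg.2 huu)]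
  have hau : 4*B₂*α^2 ≤ a * u := by
    have h1 : 4*B₂*α^2/a ≤ u := by linarith
    rw [div_le_iff₀ ha] at h1; linarith
  obtain ⟨X, hX_def⟩ : ∃ X : ℝ, X = x N := ⟨_, rfl⟩
  obtain ⟨Y, hY_def⟩ : ∃ Y : ℝ, Y = y N := ⟨_, rfl⟩
  rw [← hX_def] at hx0 hA hB
  rw [← hY_def] at hlt hA hB
  rw [← hX_def] at hlt
  have hΔ0 : 0 ≤ Y - X := sub_nonneg.2 hlt.le
  have hY0 : 0 ≤ Y := le_of_lt (lt_of_le_of_lt hx0 hlt)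
  have hN2 : ((N:ℝ)) ^ 2 = u ^ 6 := by rw [← hu3]; ring
  have hA' : X*(X+1)*(2*X+1) + Y*(Y+1)*(2*Y+1) = 12*a*u^6 := by
    simp only [phi] at hA
    rw [hN2] at hA
    linear_combination 6 * hA
  have hB' : (Y - X)*(X + Y + 1) = 2*b*u^3 := by
    simp only [psi] at hB
    rw [← hu3] at hB
    linear_combination 2 * hB
  have hXphi : 0 ≤ X*(X+1)*(2*X+1) :=
    mul_nonneg (mul_nonneg hx0 (by linarith)) (by linarith)
  -- upper bound for Y
  have hYub : Y ≤ α * u ^ 2 := by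
    apply cube_le_aux hY0
    have h1 : (α * u^2)^3 = 6*a*u^6 := by rw [mul_pow, hα3]; ring
    rw [h1]
    linarith [hA', hXphi, sq_nonneg Y, hY0]
  -- monotonicity of phi
  have hmono : X*(X+1)*(2*X+1) ≤ Y*(Y+1)*(2*Y+1) := by
    linarith [mul_nonneg hΔ0 (mul_nonneg hx0 hx0), mul_nonneg hΔ0 (mul_nonneg hx0 hY0),
      mul_nonneg hΔ0 (mul_nonneg hY0 hY0), mul_nonneg hΔ0 hx0, mul_nonneg hΔ0 hY0, hΔ0]
  have hY1lb : β * u ^ 2 ≤ Y + 1 := by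
    apply cube_le_aux (by positivity)
    have h1 : (β * u^2)^3 = 3*a*u^6 := by rw [mul_pow, hβ3]; ring
    rw [h1]
    linarith [hA', hmono, sq_nonneg Y, hY0]
  -- Δ upper bound
  have hΔβ : (Y - X) * (β * u ^ 2) ≤ 2*b*u^3 := by
    linarith [hB', mul_nonneg hΔ0 (by linarith : (0:ℝ) ≤ X + Y + 1 - β * u ^ 2)]
  have hΔub : Y - X ≤ B₂ * u := by
    have hpos : (0:ℝ) < β * u ^ 2 := by positivity
    have h2 : (Y - X) * (β * u ^ 2) ≤ (B₂ * u) * (β * u ^ 2) := by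
      have h3 : (B₂ * u) * (β * u ^ 2) = 2*b*u^3 := by
        rw [show (B₂ * u) * (β * u ^ 2) = (β * B₂) * u^3 by ring, hβB₂]
      linarith
    exact le_of_mul_le_mul_right h2 hpos
  -- Δ lower bound
  have hΔlb : c₂ * u ≤ Y - X := by
    have hsum : X + Y + 1 ≤ 3 * α * u ^ 2 := by linarith [hlt.le, hYub, hαu]
    have h1 : 2*b*u^3 ≤ (Y - X) * (3 * α * u ^ 2) := by
      linarith [hB', mul_nonneg hΔ0 (by linarith : (0:ℝ) ≤ 3 * α * u ^ 2 - (X + Y + 1))]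
    have hpos : (0:ℝ) < 3 * α * u ^ 2 := by positivity
    have h2 : (c₂ * u) * (3 * α * u ^ 2) ≤ (Y - X) * (3 * α * u ^ 2) := by
      have h3 : (c₂ * u) * (3 * α * u ^ 2) = 2*b*u^3 := by
        rw [show (c₂ * u) * (3 * α * u ^ 2) = (c₂ * (3*α)) * u^3 by ring, hc₂eq]
      linarith
    exact le_of_mul_le_mul_right h2 hpos
  -- lower bound for X
  have hY1ub : Y + 1 ≤ 2 * α * u ^ 2 := by linarith
  have hdiff : Y*(Y+1)*(2*Y+1) - X*(X+1)*(2*X+1) ≤ 6*(Y-X)*(Y+1)^2 := by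
    linarith [mul_nonneg (sq_nonneg (Y-X)) hY0, mul_nonneg (sq_nonneg (Y-X)) hx0,
      sq_nonneg (Y-X), mul_nonneg hΔ0 hY0, hΔ0]
  have hdiff2 : Y*(Y+1)*(2*Y+1) - X*(X+1)*(2*X+1) ≤ 24*B₂*α^2*u^5 := by
    have e1 : 0 ≤ (B₂*u - (Y-X)) * (Y+1)^2 := mul_nonneg (by linarith) (sq_nonneg _)
    have e2' : 0 ≤ (2*α*u^2 - (Y+1)) * (2*α*u^2 + (Y+1)) :=
      mul_nonneg (by linarith) (by linarith)
    have e2 : 0 ≤ (B₂*u) * ((2*α*u^2 - (Y+1)) * (2*α*u^2 + (Y+1))) :=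
      mul_nonneg (mul_nonneg hB₂.le hu0) e2'
    linarith [hdiff, e1, e2]
  have hXlb3 : 3*a*u^6 ≤ X*(X+1)*(2*X+1) := by
    have hu5 : (0:ℝ) ≤ u^5 := by positivity
    have h5 := mul_le_mul_of_nonneg_right hau hu5
    linarith [hA', hdiff2, h5]
  have hX1lb : γ * u ^ 2 ≤ X + 1 := by
    apply cube_le_aux (by positivity)
    have h1 : (γ * u^2)^3 = (3*a/2)*u^6 := by rw [mul_pow, hγ3]; ring
    rw [h1]
    linarith [hXlb3, sq_nonneg X, hx0]
  have hXlb : γ/2 * u ^ 2 ≤ X := by linarith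
  -- conclude
  rw [hu2, ← hu_def, ← hX_def, ← hY_def]
  have hu2nn : (0:ℝ) ≤ u ^ 2 := by positivity
  have hcγ : min (γ/2) c₂ ≤ γ/2 := min_le_left _ _
  have hcΔ : min (γ/2) c₂ ≤ c₂ := min_le_right _ _
  have hc'α : α ≤ max α B₂ := le_max_left _ _
  have hc'B : B₂ ≤ max α B₂ := le_max_right _ _
  refine ⟨⟨?_, ?_⟩, ⟨?_, ?_⟩, ?_, ?_⟩
  · calc min (γ/2) c₂ * u^2 ≤ γ/2 * u^2 := mul_le_mul_of_nonneg_right hcγ hu2nn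
      _ ≤ X := hXlb
  · calc X ≤ Y := hlt.le
      _ ≤ α * u^2 := hYub
      _ ≤ max α B₂ * u^2 := mul_le_mul_of_nonneg_right hc'α hu2nn
  · calc min (γ/2) c₂ * u^2 ≤ γ/2 * u^2 := mul_le_mul_of_nonneg_right hcγ hu2nn
      _ ≤ X := hXlb
      _ ≤ Y := hlt.le
  · calc Y ≤ α * u^2 := hYub
      _ ≤ max α B₂ * u^2 := mul_le_mul_of_nonneg_right hc'α hu2nn
  · calc min (γ/2) c₂ * u ≤ c₂ * u := mul_le_mul_of_nonneg_right hcΔ hu0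
      _ ≤ Y - X := hΔlb
  · calc Y - X ≤ B₂ * u := hΔub
      _ ≤ max α B₂ * u := mul_le_mul_of_nonneg_right hc'B hu0
end

section
/- Let φ(x) = x(x+1)(2x+1)/6 and ψ(x) = x(x+1)/2. Suppose (x_N^r, y_N^r) solves φ(x)+φ(y) = 2(d*/d)N², ψ(y)−ψ(x) = (c*/d)N, and (x_N, y_N) are integers with |x_N − x_N^r| ≤ 1/2 and |y_N − y_N^r| ≤ 1/2. Define d*_N = (d/(2N²))(φ(x_N)+φ(y_N)) and c*_N = (d/N)(ψ(y_N)−ψ(x_N)). Then there exists C > 0 with |d*_N − d*| ≤ C N^{−2/3} and |c*_N − c*| ≤ C N^{−1/3} for all sufficiently large N. -/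
lemma phi_diff (a b M : ℝ) (hab : |a - b| ≤ 1/2) (hb0 : 0 ≤ b) (hbM : b ≤ M)
    (hM : 1 ≤ M) : |phi a - phi b| ≤ 2 * M^2 := by
  rw [abs_le] at hab ⊢
  obtain ⟨h1, h2⟩ := hab
  have e1 : (0:ℝ) ≤ 1/2 - (a - b) := by linarith
  have e2 : (0:ℝ) ≤ 1/2 + (a - b) := by linarith
  have hbM2 : b * b ≤ M * M := mul_le_mul hbM hbM hb0 (by linarith)
  have hbMM : b ≤ M * M := le_trans hbM (by nlinarith)
  have hM2 : 1 ≤ M * M := by nlinarith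
  unfold phi
  constructor <;> nlinarith [mul_nonneg (mul_nonneg e1 e2) hb0,
    mul_nonneg (mul_nonneg e1 e1) e2, mul_nonneg (mul_nonneg e1 e2) e2,
    mul_nonneg (mul_nonneg e1 e1) e1, mul_nonneg (mul_nonneg e2 e2) e2,
    mul_nonneg (mul_nonneg e1 hb0) hb0, mul_nonneg (mul_nonneg e2 hb0) hb0,
    mul_nonneg e1 hb0, mul_nonneg e2 hb0]

lemma psi_diff (a b M : ℝ) (hab : |a - b| ≤ 1/2) (hb0 : 0 ≤ b) (hbM : b ≤ M)
    (hM : 1 ≤ M) : |psi a - psi b| ≤ M := by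
  rw [abs_le] at hab ⊢
  obtain ⟨h1, h2⟩ := hab
  unfold psi
  constructor <;> nlinarith [sq_nonneg (a - b)]

set_option maxHeartbeats 1000000 in
theorem perturbed_coefficients_estimate (d dstar cstar : ℝ)
    (hd : 0 < d) (hdstar : 0 < dstar) (hcstar : 0 < cstar)
    (xr yr : ℕ → ℝ) (x y : ℕ → ℤ) (dstarN cstarN : ℕ → ℝ)
    (hsol : ∀ᶠ N : ℕ in Filter.atTop,
      0 ≤ xr N ∧ xr N < yr N ∧
      phi (xr N) + phi (yr N) = 2 * (dstar / d) * (N : ℝ) ^ 2 ∧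
      psi (yr N) - psi (xr N) = (cstar / d) * (N : ℝ))
    (hxnear : ∀ N : ℕ, |(x N : ℝ) - xr N| ≤ 1 / 2)
    (hynear : ∀ N : ℕ, |(y N : ℝ) - yr N| ≤ 1 / 2)
    (hdstarN : ∀ N : ℕ, 1 ≤ N →
      dstarN N = (d / (2 * (N : ℝ) ^ 2)) * (phi (x N) + phi (y N)))
    (hcstarN : ∀ N : ℕ, 1 ≤ N →
      cstarN N = (d / (N : ℝ)) * (psi (y N) - psi (x N))) :
    ∃ C > 0, ∀ᶠ N : ℕ in Filter.atTop,
      |dstarN N - dstar| ≤ C * (N : ℝ) ^ (-(2 : ℝ) / 3) ∧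
      |cstarN N - cstar| ≤ C * (N : ℝ) ^ (-(1 : ℝ) / 3) := by
  set k0 : ℝ := (12 * dstar / d) ^ ((1:ℝ)/3) with hk0
  set K : ℝ := max 1 k0 with hK
  have hK1 : (1:ℝ) ≤ K := le_max_left _ _
  have hK0 : (0:ℝ) < K := by linarith
  refine ⟨2 * d * K^2 + 2 * d * K, by positivity, ?_⟩
  filter_upwards [hsol, Filter.eventually_ge_atTop 1] with N hs hN1
  obtain ⟨hx0, hxy, hphi, hpsi⟩ := hs
  have hNR : (1:ℝ) ≤ (N:ℝ) := by exact_mod_cast hN1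
  have hNpos : (0:ℝ) < (N:ℝ) := by linarith
  set t : ℝ := (N:ℝ) ^ ((2:ℝ)/3) with ht
  have ht1 : (1:ℝ) ≤ t := Real.one_le_rpow hNR (by norm_num)
  have ht0 : (0:ℝ) < t := by linarith
  set M : ℝ := K * t with hMdef
  have hM1 : (1:ℝ) ≤ M := by
    calc (1:ℝ) = 1 * 1 := by ring
      _ ≤ K * t := mul_le_mul hK1 ht1 zero_le_one hK0.le
  -- t * t = N^2 * N^(-2/3)
  have htt : t * t = (N:ℝ)^2 * (N:ℝ) ^ (-(2:ℝ)/3) := by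
    rw [ht, ← Real.rpow_add hNpos, ← Real.rpow_natCast (N:ℝ) 2,
      ← Real.rpow_add hNpos]
    norm_num
  -- t = N * N^(-1/3)
  have htn : t = (N:ℝ) * (N:ℝ) ^ (-(1:ℝ)/3) := by
    rw [ht]
    nth_rewrite 2 [← Real.rpow_one (N:ℝ)]
    rw [← Real.rpow_add hNpos]
    norm_num
  have hrp2 : (0:ℝ) < (N:ℝ) ^ (-(2:ℝ)/3) := Real.rpow_pos_of_pos hNpos _
  have hrp1 : (0:ℝ) < (N:ℝ) ^ (-(1:ℝ)/3) := Real.rpow_pos_of_pos hNpos _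
  -- bound yr N ≤ M
  have hy0 : 0 ≤ yr N := le_of_lt (lt_of_le_of_lt hx0 hxy)
  have hphix : 0 ≤ phi (xr N) := by
    unfold phi
    nlinarith [mul_nonneg hx0 hx0, mul_nonneg (mul_nonneg hx0 hx0) hx0]
  have hycube : (yr N)^3 ≤ (k0 * t)^3 := by
    have hk3 : k0 ^ 3 = 12 * dstar / d := by
      rw [hk0, ← Real.rpow_natCast ((12 * dstar / d) ^ ((1:ℝ)/3)) 3,
        ← Real.rpow_mul (by positivity)]
      norm_num
    have ht3 : t ^ 3 = (N:ℝ)^2 := by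
      rw [ht, ← Real.rpow_natCast ((N:ℝ) ^ ((2:ℝ)/3)) 3,
        ← Real.rpow_mul hNpos.le, ← Real.rpow_natCast (N:ℝ) 2]
      norm_num
    have h6 : (yr N)^3 ≤ 6 * phi (yr N) := by
      unfold phi
      nlinarith [mul_nonneg hy0 hy0, mul_nonneg (mul_nonneg hy0 hy0) hy0]
    have : 6 * phi (yr N) ≤ 12 * (dstar / d) * (N:ℝ)^2 := by linarith
    calc (yr N)^3 ≤ 12 * (dstar / d) * (N:ℝ)^2 := by linarith
      _ = (k0 * t)^3 := by rw [mul_pow, hk3, ht3]; ring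
  have hyM : yr N ≤ M := by
    have hk0nn : 0 ≤ k0 := Real.rpow_nonneg (by positivity) _
    have := le_of_pow_le_pow_left₀ (n := 3) (by norm_num)
      (by positivity : (0:ℝ) ≤ k0 * t) hycube
    calc yr N ≤ k0 * t := this
      _ ≤ K * t := mul_le_mul_of_nonneg_right (le_max_right 1 k0) ht0.le
  have hxM : xr N ≤ M := le_trans hxy.le hyM
  -- differences
  have hpx := phi_diff (x N) (xr N) M (hxnear N) hx0 hxM hM1
  have hpy := phi_diff (y N) (yr N) M (hynear N) hy0 hyM hM1
  have hsx := psi_diff (x N) (xr N) M (hxnear N) hx0 hxM hM1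
  have hsy := psi_diff (y N) (yr N) M (hynear N) hy0 hyM hM1
  have hN2 : ((N:ℝ)^2) ≠ 0 := by positivity
  constructor
  · have heq : dstarN N - dstar =
        (d / (2 * (N:ℝ)^2)) * ((phi (x N) - phi (xr N)) + (phi (y N) - phi (yr N))) := by
      rw [hdstarN N hN1]
      have : dstar = (d / (2 * (N:ℝ)^2)) * (phi (xr N) + phi (yr N)) := by
        rw [hphi]; field_simp
      rw [this]; ring
    rw [heq, abs_mul, abs_of_pos (by positivity : (0:ℝ) < d / (2 * (N:ℝ)^2))]
    have habs : |(phi (x N) - phi (xr N)) + (phi (y N) - phi (yr N))| ≤ 4 * M^2 :=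
      le_trans (abs_add_le _ _) (by linarith)
    calc d / (2 * (N:ℝ)^2) * |(phi (x N) - phi (xr N)) + (phi (y N) - phi (yr N))|
        ≤ d / (2 * (N:ℝ)^2) * (4 * M^2) := by
          apply mul_le_mul_of_nonneg_left habs (by positivity)
      _ = 2 * d * K^2 * (N:ℝ) ^ (-(2:ℝ)/3) := by
          have h2 : M^2 = K^2 * ((N:ℝ)^2 * (N:ℝ) ^ (-(2:ℝ)/3)) := by
            have hmm : M^2 = K^2 * (t * t) := by rw [hMdef]; ring
            rw [hmm, htt]
          rw [h2]; field_simp; ring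
      _ ≤ (2 * d * K^2 + 2 * d * K) * (N:ℝ) ^ (-(2:ℝ)/3) := by
          apply mul_le_mul_of_nonneg_right _ hrp2.le
          have h9 : 0 ≤ 2 * d * K := by positivity
          linarith
  · have heq : cstarN N - cstar =
        (d / (N:ℝ)) * ((psi (y N) - psi (yr N)) - (psi (x N) - psi (xr N))) := by
      rw [hcstarN N hN1]
      have : cstar = (d / (N:ℝ)) * (psi (yr N) - psi (xr N)) := by
        rw [hpsi]; field_simp
      rw [this]; ring
    rw [heq, abs_mul, abs_of_pos (by positivity : (0:ℝ) < d / (N:ℝ))]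
    have habs : |(psi (y N) - psi (yr N)) - (psi (x N) - psi (xr N))| ≤ 2 * M :=
      le_trans (abs_sub _ _) (by linarith)
    calc d / (N:ℝ) * |(psi (y N) - psi (yr N)) - (psi (x N) - psi (xr N))|
        ≤ d / (N:ℝ) * (2 * M) := by
          apply mul_le_mul_of_nonneg_left habs (by positivity)
      _ = 2 * d * K * (N:ℝ) ^ (-(1:ℝ)/3) := by
          rw [hMdef, htn]; field_simp
      _ ≤ (2 * d * K^2 + 2 * d * K) * (N:ℝ) ^ (-(1:ℝ)/3) := by
          apply mul_le_mul_of_nonneg_right _ hrp1.le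
          have h9 : 0 ≤ 2 * d * K^2 := by positivity
          linarith
end
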